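/- Suppose ℳ ⊆ 𝒫 is nonempty, compact and convex, and all its parameters (C,P) satisfy P s a ∈ Δ_S for all s, a. Then: (1) the unique fixed point W^o of the operator V ↦ (min_{(C,P)∈ℳ} f_s(V,(C,P)))_s exists and satisfies, for every s, W^o_s = min_{π_s ∈ Δ_A} min_{(C,P) ∈ ℳ} Σ_a π_{s,a}·(C s a + γ·Σ_{s'} P s a s' · V s') evaluated at V = W^o, with both minima attained; and (2) the unique fixed point W^r of the operator V ↦ (max_{(C,P)∈ℳ} f_s(V,(C,P)))_s exists and satisfies, for every s, W^r_s = min_{π_s ∈ Δ_A} max_{(C,P) ∈ ℳ} Σ_a π_{s,a}·(C s a + γ·Σ_{s'} P s a s' · V s') evaluated at V = W^r, with the outer minimum attained (i.e., the max-min equals the min-max, so an optimistic policy π^o and a robust policy π^r exist). -/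

import Mathlib

/-- The space of MDP parameters `(C, P)`. -/
abbrev Param (S A : ℕ) := (Fin S → Fin A → ℝ) × (Fin S → Fin A → Fin S → ℝ)

/-- The probability simplex over `Fin k`. -/
def simplex (k : ℕ) : Set (Fin k → ℝ) := {p | (∀ i, 0 ≤ p i) ∧ ∑ i, p i = 1}

/-- The Bellman operator. -/
noncomputable def bellman (S A : ℕ) (γ : ℝ) (V : Fin S → ℝ) (m : Param S A) :
    Fin S → ℝ :=
  fun s => ⨅ a : Fin A, (m.1 s a + γ * ∑ s', m.2 s a s' * V s')

/-- The one-state policy-evaluation expression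
`Σ_a π_{s,a}·(C s a + γ·Σ_{s'} P s a s' · V s')`. -/
noncomputable def gRow (S A : ℕ) (γ : ℝ) (V : Fin S → ℝ) (πs : Fin A → ℝ)
    (m : Param S A) (s : Fin S) : ℝ :=
  ∑ a, πs a * (m.1 s a + γ * ∑ s', m.2 s a s' * V s')

namespace RobustAux

/-- The one-action term in the Bellman operator. -/
noncomputable def bterm (S A : ℕ) (γ : ℝ) (V : Fin S → ℝ) (m : Param S A)
    (s : Fin S) (a : Fin A) : ℝ :=
  m.1 s a + γ * ∑ s', m.2 s a s' * V s'

variable {S A : ℕ}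

lemma bellman_eq (γ : ℝ) (V : Fin S → ℝ) (m : Param S A) (s : Fin S) :
    bellman S A γ V m s = ⨅ a, bterm S A γ V m s a := rfl

lemma gRow_eq (γ : ℝ) (V : Fin S → ℝ) (πs : Fin A → ℝ) (m : Param S A) (s : Fin S) :
    gRow S A γ V πs m s = ∑ a, πs a * bterm S A γ V m s a := rfl

lemma bellman_exists_min (hA : 0 < A) (γ : ℝ) (V : Fin S → ℝ) (m : Param S A) (s : Fin S) :
    ∃ a₀, bellman S A γ V m s = bterm S A γ V m s a₀ ∧
      ∀ a, bterm S A γ V m s a₀ ≤ bterm S A γ V m s a := by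
  haveI : Nonempty (Fin A) := Fin.pos_iff_nonempty.mp hA
  obtain ⟨a₀, h⟩ := Finite.exists_min (bterm S A γ V m s)
  exact ⟨a₀, le_antisymm (ciInf_le (Finite.bddBelow_range _) a₀) (le_ciInf h), h⟩

lemma bellman_le_bterm (hA : 0 < A) (γ : ℝ) (V : Fin S → ℝ) (m : Param S A) (s : Fin S)
    (a : Fin A) : bellman S A γ V m s ≤ bterm S A γ V m s a := by
  haveI : Nonempty (Fin A) := Fin.pos_iff_nonempty.mp hA
  exact ciInf_le (Finite.bddBelow_range _) a

lemma continuous_bterm (γ : ℝ) (V : Fin S → ℝ) (s : Fin S) (a : Fin A) :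
    Continuous (fun m : Param S A => bterm S A γ V m s a) := by
  unfold bterm
  fun_prop

lemma continuous_bellman (hA : 0 < A) (γ : ℝ) (V : Fin S → ℝ) (s : Fin S) :
    Continuous (fun m : Param S A => bellman S A γ V m s) := by
  haveI : Nonempty (Fin A) := Fin.pos_iff_nonempty.mp hA
  have h : (fun m : Param S A => bellman S A γ V m s)
      = fun m => Finset.univ.inf' Finset.univ_nonempty (fun a => bterm S A γ V m s a) := by
    funext m
    rw [Finset.inf'_univ_eq_ciInf, bellman_eq]
  rw [h]
  exact Continuous.finset_inf'_apply _ (fun a _ => continuous_bterm γ V s a)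

lemma continuous_gRow (γ : ℝ) (V : Fin S → ℝ) (πs : Fin A → ℝ) (s : Fin S) :
    Continuous (fun m : Param S A => gRow S A γ V πs m s) := by
  unfold gRow
  fun_prop

lemma bellman_le_gRow (hA : 0 < A) (γ : ℝ) (V : Fin S → ℝ) {πs : Fin A → ℝ}
    (m : Param S A) (s : Fin S) (hπ : πs ∈ simplex A) :
    bellman S A γ V m s ≤ gRow S A γ V πs m s := by
  have h1 : ∑ a, πs a * bellman S A γ V m s = bellman S A γ V m s := by
    rw [← Finset.sum_mul, hπ.2, one_mul]
  rw [gRow_eq, ← h1]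
  exact Finset.sum_le_sum fun a _ =>
    mul_le_mul_of_nonneg_left (bellman_le_bterm hA γ V m s a) (hπ.1 a)

lemma dirac_mem_simplex (hA : 0 < A) (a₀ : Fin A) :
    (fun a => if a = a₀ then (1:ℝ) else 0) ∈ simplex A := by
  constructor
  · intro a; by_cases h : a = a₀ <;> simp [h]
  · simp

lemma gRow_dirac (γ : ℝ) (V : Fin S → ℝ) (m : Param S A) (s : Fin S) (a₀ : Fin A) :
    gRow S A γ V (fun a => if a = a₀ then 1 else 0) m s = bterm S A γ V m s a₀ := by
  rw [gRow_eq, Finset.sum_eq_single a₀]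
  · simp
  · intro b _ hb; simp [hb]
  · intro h; exact absurd (Finset.mem_univ a₀) h

lemma abs_csInf_sub_csInf_le {X : Type*} {M : Set X} (hne : M.Nonempty)
    {g h : X → ℝ} (hbg : BddBelow (g '' M)) (hbh : BddBelow (h '' M))
    {d : ℝ} (hd : ∀ m ∈ M, |g m - h m| ≤ d) :
    |sInf (g '' M) - sInf (h '' M)| ≤ d := by
  have key : ∀ (g h : X → ℝ), BddBelow (g '' M) → (∀ m ∈ M, |g m - h m| ≤ d) →
      sInf (g '' M) - sInf (h '' M) ≤ d := by
    intro g h hbg hd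
    have : sInf (g '' M) - d ≤ sInf (h '' M) := by
      apply le_csInf (hne.image h)
      rintro y ⟨m, hm, rfl⟩
      have h1 : sInf (g '' M) ≤ g m := csInf_le hbg ⟨m, hm, rfl⟩
      have h2 := (abs_sub_le_iff.mp (hd m hm)).1
      linarith
    linarith
  rw [abs_sub_le_iff]
  refine ⟨key g h hbg hd, key h g hbh fun m hm => ?_⟩
  rw [abs_sub_comm]
  exact hd m hm

lemma abs_csSup_sub_csSup_le {X : Type*} {M : Set X} (hne : M.Nonempty)
    {g h : X → ℝ} (hbg : BddAbove (g '' M)) (hbh : BddAbove (h '' M))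
    {d : ℝ} (hd : ∀ m ∈ M, |g m - h m| ≤ d) :
    |sSup (g '' M) - sSup (h '' M)| ≤ d := by
  have key : ∀ (g h : X → ℝ), BddAbove (h '' M) → (∀ m ∈ M, |g m - h m| ≤ d) →
      sSup (g '' M) - sSup (h '' M) ≤ d := by
    intro g h hbh hd
    have : sSup (g '' M) ≤ sSup (h '' M) + d := by
      apply csSup_le (hne.image g)
      rintro y ⟨m, hm, rfl⟩
      have h1 : h m ≤ sSup (h '' M) := le_csSup hbh ⟨m, hm, rfl⟩
      have h2 := (abs_sub_le_iff.mp (hd m hm)).1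
      linarith
    linarith
  rw [abs_sub_le_iff]
  refine ⟨key g h hbh hd, key h g hbg fun m hm => ?_⟩
  rw [abs_sub_comm]
  exact hd m hm

lemma abs_bterm_sub_bterm_le {γ : ℝ} (hγ0 : 0 < γ) (V V' : Fin S → ℝ)
    {m : Param S A} {s : Fin S} {a : Fin A} (hrow : m.2 s a ∈ simplex S) :
    |bterm S A γ V m s a - bterm S A γ V' m s a| ≤ γ * dist V V' := by
  have h1 : bterm S A γ V m s a - bterm S A γ V' m s a
      = γ * ∑ s', m.2 s a s' * (V s' - V' s') := by
    unfold bterm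
    rw [show (∑ s', m.2 s a s' * (V s' - V' s'))
        = (∑ s', m.2 s a s' * V s') - (∑ s', m.2 s a s' * V' s') by
      rw [← Finset.sum_sub_distrib]
      exact Finset.sum_congr rfl fun s' _ => mul_sub _ _ _]
    ring
  rw [h1, abs_mul, abs_of_pos hγ0]
  apply mul_le_mul_of_nonneg_left _ hγ0.le
  calc |∑ s', m.2 s a s' * (V s' - V' s')|
      ≤ ∑ s', |m.2 s a s' * (V s' - V' s')| := Finset.abs_sum_le_sum_abs _ _
    _ ≤ ∑ s', m.2 s a s' * dist V V' := by
        apply Finset.sum_le_sum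
        intro s' _
        rw [abs_mul, abs_of_nonneg (hrow.1 s')]
        apply mul_le_mul_of_nonneg_left _ (hrow.1 s')
        rw [← Real.dist_eq]
        exact dist_le_pi_dist V V' s'
    _ = dist V V' := by rw [← Finset.sum_mul, hrow.2, one_mul]

lemma abs_bellman_sub_bellman_le (hA : 0 < A) {γ : ℝ} (hγ0 : 0 < γ) (V V' : Fin S → ℝ)
    {m : Param S A} {s : Fin S} (hrow : ∀ a, m.2 s a ∈ simplex S) :
    |bellman S A γ V m s - bellman S A γ V' m s| ≤ γ * dist V V' := by
  obtain ⟨a₀, hV0, hVm⟩ := bellman_exists_min hA γ V m s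
  obtain ⟨a₁, hV1, hV'm⟩ := bellman_exists_min hA γ V' m s
  rw [abs_sub_le_iff]
  constructor
  · rw [hV0, hV1]
    have h1 : bterm S A γ V m s a₀ ≤ bterm S A γ V m s a₁ := hVm a₁
    have h2 := (abs_sub_le_iff.mp (abs_bterm_sub_bterm_le hγ0 V V' (hrow a₁))).1
    linarith
  · rw [hV0, hV1]
    have h1 : bterm S A γ V' m s a₁ ≤ bterm S A γ V' m s a₀ := hV'm a₀
    have h2 := (abs_sub_le_iff.mp (abs_bterm_sub_bterm_le hγ0 V V' (hrow a₀))).2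
    linarith

end RobustAux

open RobustAux in
/-- for nonempty compact convex `ℳ` (with rows in the simplex), the
optimistic value vector `W^o` (fixed point of `min_m f`) and the robust value vector
`W^r` (fixed point of `max_m f`) exist and are characterized as attained min-min and
min-max values, respectively; in particular optimistic and robust policies exist. -/
theorem robustMDP_value_vectors_exist (S A : ℕ) (hS : 0 < S) (hA : 0 < A)
    (γ : ℝ) (hγ0 : 0 < γ) (hγ1 : γ < 1)
    (M : Set (Param S A)) (hMne : M.Nonempty) (hMcp : IsCompact M)
    (hMcvx : Convex ℝ M) (hMrow : ∀ m ∈ M, ∀ s a, m.2 s a ∈ simplex S) :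
    (∃! Wo : Fin S → ℝ,
        (fun s => sInf ((fun m => bellman S A γ Wo m s) '' M)) = Wo) ∧
    (∀ Wo : Fin S → ℝ,
      (fun s => sInf ((fun m => bellman S A γ Wo m s) '' M)) = Wo →
      ∀ s, IsLeast
        ((fun q : (Fin A → ℝ) × Param S A => gRow S A γ Wo q.1 q.2 s) ''
          (simplex A ×ˢ M)) (Wo s)) ∧
    (∃! Wr : Fin S → ℝ,
        (fun s => sSup ((fun m => bellman S A γ Wr m s) '' M)) = Wr) ∧
    (∀ Wr : Fin S → ℝ,
      (fun s => sSup ((fun m => bellman S A γ Wr m s) '' M)) = Wr →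
      ∀ s, IsLeast
        ((fun πs : Fin A → ℝ => sSup ((fun m => gRow S A γ Wr πs m s) '' M)) ''
          simplex A) (Wr s)) := by
  haveI : Nonempty (Fin A) := Fin.pos_iff_nonempty.mp hA
  set K : NNReal := ⟨γ, hγ0.le⟩ with hK
  have hKcoe : (K : ℝ) = γ := rfl
  have hKlt : K < 1 := by
    rw [← NNReal.coe_lt_coe, hKcoe, NNReal.coe_one]; exact hγ1
  have hbddB : ∀ (V : Fin S → ℝ) (s : Fin S),
      BddBelow ((fun m => bellman S A γ V m s) '' M) :=
    fun V s => (hMcp.image (continuous_bellman hA γ V s)).bddBelow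
  have hbddA : ∀ (V : Fin S → ℝ) (s : Fin S),
      BddAbove ((fun m => bellman S A γ V m s) '' M) :=
    fun V s => (hMcp.image (continuous_bellman hA γ V s)).bddAbove
  have hdiff : ∀ (V V' : Fin S → ℝ) (s : Fin S), ∀ m ∈ M,
      |bellman S A γ V m s - bellman S A γ V' m s| ≤ γ * dist V V' :=
    fun V V' s m hm => abs_bellman_sub_bellman_le hA hγ0 V V' (fun a => hMrow m hm s a)
  -- the two operators
  have hCinf : ContractingWith K
      (fun (V : Fin S → ℝ) (s : Fin S) => sInf ((fun m => bellman S A γ V m s) '' M)) := by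
    refine ⟨hKlt, LipschitzWith.of_dist_le_mul fun V V' => ?_⟩
    rw [hKcoe, dist_pi_le_iff (by positivity)]
    intro s
    rw [Real.dist_eq]
    exact abs_csInf_sub_csInf_le hMne (hbddB V s) (hbddB V' s) (hdiff V V' s)
  have hCsup : ContractingWith K
      (fun (V : Fin S → ℝ) (s : Fin S) => sSup ((fun m => bellman S A γ V m s) '' M)) := by
    refine ⟨hKlt, LipschitzWith.of_dist_le_mul fun V V' => ?_⟩
    rw [hKcoe, dist_pi_le_iff (by positivity)]
    intro s
    rw [Real.dist_eq]
    exact abs_csSup_sub_csSup_le hMne (hbddA V s) (hbddA V' s) (hdiff V V' s)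
  refine ⟨⟨_, hCinf.fixedPoint_isFixedPt, fun y hy => hCinf.fixedPoint_unique hy⟩,
    ?_, ⟨_, hCsup.fixedPoint_isFixedPt, fun y hy => hCsup.fixedPoint_unique hy⟩, ?_⟩
  · -- Part 2 : min-min characterization
    intro Wo hWo s
    have hWos : sInf ((fun m => bellman S A γ Wo m s) '' M) = Wo s := congrFun hWo s
    constructor
    · obtain ⟨m₀, hm₀M, hm₀⟩ :=
        hMcp.exists_isMinOn hMne (continuous_bellman hA γ Wo s).continuousOn
      have hinf : sInf ((fun m => bellman S A γ Wo m s) '' M) = bellman S A γ Wo m₀ s := by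
        refine le_antisymm (csInf_le (hbddB Wo s) ⟨m₀, hm₀M, rfl⟩) ?_
        apply le_csInf (hMne.image _)
        rintro y ⟨m, hm, rfl⟩
        exact hm₀ hm
      obtain ⟨a₀, ha₀, -⟩ := bellman_exists_min hA γ Wo m₀ s
      refine ⟨⟨fun a => if a = a₀ then 1 else 0, m₀⟩, ⟨dirac_mem_simplex hA a₀, hm₀M⟩, ?_⟩
      show gRow S A γ Wo (fun a => if a = a₀ then 1 else 0) m₀ s = Wo s
      rw [gRow_dirac, ← ha₀, ← hinf, hWos]
    · rintro y ⟨⟨πs, m⟩, ⟨hπ, hm⟩, rfl⟩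
      calc Wo s = sInf ((fun m => bellman S A γ Wo m s) '' M) := hWos.symm
        _ ≤ bellman S A γ Wo m s := csInf_le (hbddB Wo s) ⟨m, hm, rfl⟩
        _ ≤ gRow S A γ Wo πs m s := bellman_le_gRow hA γ Wo m s hπ
  · -- Part 4 : min-max characterization
    intro Wr hWr s
    have hWrs : sSup ((fun m => bellman S A γ Wr m s) '' M) = Wr s := congrFun hWr s
    have hgbdd : ∀ πs : Fin A → ℝ, BddAbove ((fun m => gRow S A γ Wr πs m s) '' M) :=
      fun πs => (hMcp.image (continuous_gRow γ Wr πs s)).bddAbove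
    have hlb : ∀ πs ∈ simplex A, Wr s ≤ sSup ((fun m => gRow S A γ Wr πs m s) '' M) := by
      intro πs hπ
      rw [← hWrs]
      apply csSup_le (hMne.image _)
      rintro y ⟨m, hm, rfl⟩
      exact le_trans (bellman_le_gRow hA γ Wr m s hπ)
        (le_csSup (hgbdd πs) ⟨m, hm, rfl⟩)
    constructor
    · -- existence of a robust policy, via separation
      set φ : Param S A → (Fin A → ℝ) := fun m a => bterm S A γ Wr m s a - Wr s with hφ
      have hPeq : {x : Fin A → ℝ | ∀ a, 0 < x a}
          = Set.pi Set.univ (fun _ : Fin A => Set.Ioi (0:ℝ)) := by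
        ext x; simp [Set.mem_pi]
      have hPopen : IsOpen {x : Fin A → ℝ | ∀ a, 0 < x a} := by
        rw [hPeq]; exact isOpen_set_pi Set.finite_univ (fun _ _ => isOpen_Ioi)
      have hPconv : Convex ℝ {x : Fin A → ℝ | ∀ a, 0 < x a} := by
        rw [hPeq]; exact convex_pi fun _ _ => convex_Ioi 0
      have hKconv : Convex ℝ (φ '' M) := by
        rintro x ⟨m₁, hm₁, rfl⟩ y ⟨m₂, hm₂, rfl⟩ a b ha hb hab
        refine ⟨a • m₁ + b • m₂, hMcvx hm₁ hm₂ ha hb hab, ?_⟩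
        funext a'
        simp only [hφ, bterm, Prod.fst_add, Prod.smul_fst, Prod.snd_add, Prod.smul_snd,
          Pi.add_apply, Pi.smul_apply, smul_eq_mul]
        rw [show (∑ s', (a * m₁.2 s a' s' + b * m₂.2 s a' s') * Wr s')
            = a * (∑ s', m₁.2 s a' s' * Wr s') + b * (∑ s', m₂.2 s a' s' * Wr s') by
          rw [Finset.mul_sum, Finset.mul_sum, ← Finset.sum_add_distrib]
          exact Finset.sum_congr rfl fun s' _ => by ring]
        have hb' : b = 1 - a := by linarith
        rw [hb']; ring
      have hdisj : Disjoint {x : Fin A → ℝ | ∀ a, 0 < x a} (φ '' M) := by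
        rw [Set.disjoint_right]
        rintro x ⟨m, hm, rfl⟩ hx
        obtain ⟨a₀, ha₀, -⟩ := bellman_exists_min hA γ Wr m s
        have h1 : bellman S A γ Wr m s ≤ Wr s := by
          rw [← hWrs]; exact le_csSup (hbddA Wr s) ⟨m, hm, rfl⟩
        rw [ha₀] at h1
        have h2 : 0 < φ m a₀ := hx a₀
        rw [hφ] at h2
        simp only at h2
        linarith
      obtain ⟨f, u, hfP, hfK⟩ := geometric_hahn_banach_open hPconv hPopen hKconv hdisj
      -- representation of f
      have hrep : ∀ x : Fin A → ℝ, f x = ∑ a, x a * f (Pi.single a 1) := by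
        intro x
        have hterm : ∀ a : Fin A, f (Pi.single a (x a)) = x a * f (Pi.single a 1) := by
          intro a
          have hsingle : (Pi.single a (x a) : Fin A → ℝ)
              = x a • (Pi.single a (1:ℝ) : Fin A → ℝ) := by
            rw [← Pi.single_smul', smul_eq_mul, mul_one]
          rw [hsingle, map_smul, smul_eq_mul]
        calc f x = f (∑ a, Pi.single a (x a)) := by rw [Finset.univ_sum_single]
          _ = ∑ a, f (Pi.single a (x a)) := map_sum f _ _
          _ = ∑ a, x a * f (Pi.single a 1) := Finset.sum_congr rfl fun a _ => hterm a
      -- f is ≤ 0 on the positive orthant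
      have hfP0 : ∀ x : Fin A → ℝ, (∀ a, 0 < x a) → f x ≤ 0 := by
        intro x hx
        by_contra hpos
        push_neg at hpos
        have htpos : 0 < (|u| + 1) / f x := div_pos (by positivity) hpos
        have hmem : ∀ a, 0 < (((|u| + 1) / f x) • x) a := by
          intro a
          simp only [Pi.smul_apply, smul_eq_mul]
          exact mul_pos htpos (hx a)
        have hlt := hfP _ hmem
        rw [map_smul, smul_eq_mul, div_mul_cancel₀ _ (ne_of_gt hpos)] at hlt
        have := le_abs_self u
        linarith
      have hone : ∀ a : Fin A, (0:ℝ) < (fun _ : Fin A => (1:ℝ)) a := fun a => one_pos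
      -- u is nonnegative
      have hu0 : 0 ≤ u := by
        by_contra hu
        push_neg at hu
        have hf1 : f (fun _ : Fin A => (1:ℝ)) < u := hfP _ hone
        have hf1neg : f (fun _ : Fin A => (1:ℝ)) < 0 := lt_trans hf1 hu
        have htpos : 0 < u / f (fun _ : Fin A => (1:ℝ)) := div_pos_of_neg_of_neg hu hf1neg
        have hmem : ∀ a, (0:ℝ) < ((u / f (fun _ : Fin A => (1:ℝ))) •
            (fun _ : Fin A => (1:ℝ))) a := by
          intro a
          simp only [Pi.smul_apply, smul_eq_mul, mul_one]
          exact htpos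
        have hlt := hfP _ hmem
        rw [map_smul, smul_eq_mul, div_mul_cancel₀ _ (ne_of_lt hf1neg)] at hlt
        exact lt_irrefl u hlt
      -- the coefficients are nonpositive
      have hc0 : ∀ a : Fin A, f (Pi.single a 1) ≤ 0 := by
        intro a
        by_contra hca
        push_neg at hca
        set f1 : ℝ := f (fun _ : Fin A => (1:ℝ)) with hf1def
        set ε : ℝ := f (Pi.single a 1) / (2 * (|f1| + 1)) with hε
        have hεpos : 0 < ε := by
          rw [hε]; exact div_pos hca (by positivity)
        have hmem : ∀ a' : Fin A, (0:ℝ) <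
            (((Pi.single a (1:ℝ) : Fin A → ℝ)) + ε • (fun _ : Fin A => (1:ℝ))) a' := by
          intro a'
          simp only [Pi.add_apply, Pi.smul_apply, smul_eq_mul, mul_one]
          by_cases h : a' = a
          · subst h; rw [Pi.single_eq_same]; linarith
          · rw [Pi.single_eq_of_ne h]; linarith
        have hle := hfP0 _ hmem
        rw [map_add, map_smul, smul_eq_mul, ← hf1def] at hle
        have h1 : -(ε * (|f1| + 1)) ≤ ε * f1 := by
          nlinarith [neg_abs_le f1, hεpos]
        have h2 : ε * (|f1| + 1) = f (Pi.single a 1) / 2 := by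
          rw [hε]; field_simp
        rw [h2] at h1
        linarith
      -- some coefficient is negative
      have hcne : ∃ a : Fin A, f (Pi.single a 1) < 0 := by
        by_contra hall
        push_neg at hall
        have hceq : ∀ a : Fin A, f (Pi.single a (1:ℝ)) = 0 :=
          fun a => le_antisymm (hc0 a) (hall a)
        obtain ⟨m₀, hm₀⟩ := hMne
        have h1 : f (φ m₀) = 0 := by rw [hrep]; simp [hceq]
        have h2 : u ≤ f (φ m₀) := hfK _ ⟨m₀, hm₀, rfl⟩
        have h3 : f (fun _ : Fin A => (1:ℝ)) < u := hfP _ hone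
        have h4 : f (fun _ : Fin A => (1:ℝ)) = 0 := by rw [hrep]; simp [hceq]
        linarith
      set Z : ℝ := ∑ a, -f (Pi.single a 1) with hZ
      have hZpos : 0 < Z := by
        obtain ⟨a₁, ha₁⟩ := hcne
        exact Finset.sum_pos' (fun a _ => by have := hc0 a; linarith)
          ⟨a₁, Finset.mem_univ a₁, by linarith⟩
      set π₀ : Fin A → ℝ := fun a => -f (Pi.single a 1) / Z with hπ₀
      have hπ₀mem : π₀ ∈ simplex A := by
        constructor
        · intro a
          rw [hπ₀]
          exact div_nonneg (by have := hc0 a; linarith) hZpos.le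
        · rw [hπ₀]
          rw [← Finset.sum_div, ← hZ]
          exact div_self (ne_of_gt hZpos)
      have hkey : ∀ m ∈ M, gRow S A γ Wr π₀ m s ≤ Wr s := by
        intro m hm
        have h1 : 0 ≤ f (φ m) := le_trans hu0 (hfK _ ⟨m, hm, rfl⟩)
        have h3 : ∑ a, π₀ a * φ m a = -(f (φ m)) / Z := by
          rw [hrep (φ m)]
          rw [show ∑ a, π₀ a * φ m a = ∑ a, -(φ m a * f (Pi.single a 1)) / Z from
            Finset.sum_congr rfl fun a _ => by rw [hπ₀]; ring]
          rw [← Finset.sum_div, ← Finset.sum_neg_distrib]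
        have h4 : ∑ a, π₀ a * φ m a ≤ 0 := by
          rw [h3]
          exact div_nonpos_of_nonpos_of_nonneg (by linarith) hZpos.le
        have h5 : ∑ a, π₀ a * φ m a = gRow S A γ Wr π₀ m s - Wr s := by
          rw [gRow_eq]
          rw [show ∑ a, π₀ a * φ m a
              = (∑ a, π₀ a * bterm S A γ Wr m s a) - ∑ a, π₀ a * Wr s by
            rw [← Finset.sum_sub_distrib]
            exact Finset.sum_congr rfl fun a _ => by rw [hφ]; ring]
          rw [← Finset.sum_mul, hπ₀mem.2, one_mul]
        have := h5 ▸ h4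
        linarith
      have hsup : sSup ((fun m => gRow S A γ Wr π₀ m s) '' M) = Wr s := by
        refine le_antisymm ?_ (hlb π₀ hπ₀mem)
        apply csSup_le (hMne.image _)
        rintro y ⟨m, hm, rfl⟩
        exact hkey m hm
      exact ⟨π₀, hπ₀mem, hsup⟩
    · rintro y ⟨πs, hπ, rfl⟩
      exact hlb πs hπ
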